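/- Fix a Følner sequence (F_n) for G and a factor map π : X → Y. Let P be a finite measurable partition of X and let Q' be a finite measurable partition of X that is measurable with respect to P^{F_k} ∨ π^{-1}(B_Y) for some k ∈ ℕ, where P^{F_k} = ⋁_{f ∈ F_k} T^{-f}P. Then for any ε > 0 there exists ε' > 0 (one may take ε' = ε/(2|F_k|)) such that cov(μ, Q', F_n, ε | π) ≤ cov(μ, P, F_n, ε' | π) for all sufficiently large n. -/

import Mathlib

open MeasureTheory Filter Set Topology
open scoped ENNReal Classical symmDiff

section SlowEntropyDefs

variable {G : Type*} [Group G]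

/-- A measure-preserving action of a group `G` on a probability space. -/
structure IsMPSystem {X : Type*} [MeasurableSpace X] (T : G → X → X) (μ : Measure X) : Prop where
  prob : IsProbabilityMeasure μ
  meas : ∀ g, Measurable (T g)
  mp : ∀ g, MeasurePreserving (T g) μ μ
  mul : ∀ g g' x, T (g * g') x = T g (T g' x)
  one : ∀ x, T 1 x = x

/-- A factor map between measure-preserving `G`-systems. -/
structure IsFactorMap {X Y : Type*} [MeasurableSpace X] [MeasurableSpace Y]
    (T : G → X → X) (μ : Measure X) (S : G → Y → Y) (ν : Measure Y) (π : X → Y) : Prop where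
  meas : Measurable π
  map : μ.map π = ν
  equiv : ∀ g x, π (T g x) = S g (π x)

/-- An isomorphism of measure-preserving `G`-systems: a factor map with an a.e. two-sided
inverse factor map. -/
def IsIsomorphism {X Y : Type*} [MeasurableSpace X] [MeasurableSpace Y]
    (T : G → X → X) (μ : Measure X) (S : G → Y → Y) (ν : Measure Y) (π : X → Y) : Prop :=
  IsFactorMap T μ S ν π ∧ ∃ ρ : Y → X, IsFactorMap S ν T μ ρ ∧
    (∀ᵐ x ∂μ, ρ (π x) = x) ∧ (∀ᵐ y ∂ν, π (ρ y) = y)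

/-- `μy` is a disintegration of `μ` over the map `π : X → Y` (with `ν` the image of `μ`). -/
structure IsDisintegration {X Y : Type*} [MeasurableSpace X] [MeasurableSpace Y]
    (μ : Measure X) (ν : Measure Y) (π : X → Y) (μy : Y → Measure X) : Prop where
  prob : ∀ y, IsProbabilityMeasure (μy y)
  meas : ∀ s : Set X, MeasurableSet s → Measurable fun y => μy y s
  eq : ∀ s : Set X, MeasurableSet s → μ s = ∫⁻ y, μy y s ∂ν
  supp : ∀ᵐ y ∂ν, μy y (π ⁻¹' {y}) = 1

/-- A (left) Følner sequence for `G`: a sequence of nonempty finite subsets `F n ⊆ G` with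
`|gFₙ ∩ Fₙ| / |Fₙ| → 1` for every `g ∈ G`. -/
def IsFolner (F : ℕ → Finset G) : Prop :=
  (∀ n, (F n).Nonempty) ∧ ∀ g : G,
    Tendsto (fun n => ((((F n).image fun h => g * h) ∩ F n).card : ℝ) / ((F n).card : ℝ))
      atTop (nhds 1)

/-- The normalized Hamming distance `d_{P,F}` between the `(P,F)`-names of two points. -/
noncomputable def hamDist {X : Type*} (T : G → X → X) {r : ℕ} (P : X → Fin r)
    (F : Finset G) (x x' : X) : ℝ :=
  ((F.filter fun f => P (T f x) ≠ P (T f x')).card : ℝ) / (F.card : ℝ)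

/-- The set `E` has `d_{P,F}`-diameter at most `ε`. -/
def diamLE {X : Type*} (T : G → X → X) {r : ℕ} (P : X → Fin r) (F : Finset G)
    (E : Set X) (ε : ℝ) : Prop :=
  ∀ x ∈ E, ∀ x' ∈ E, hamDist T P F x x' ≤ ε

/-- The Hamming `ε`-covering number `cov(λ, P, F, ε)`: the smallest `M` such that there are
sets `E₁, …, E_M` of `d_{P,F}`-diameter at most `ε` whose union has `λ`-measure `≥ 1 - ε`. -/
noncomputable def hamCov {X : Type*} [MeasurableSpace X] (T : G → X → X) (lam : Measure X)
    {r : ℕ} (P : X → Fin r) (F : Finset G) (ε : ℝ) : ℕ :=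
  sInf {M : ℕ | ∃ E : Fin M → Set X, (∀ i, diamLE T P F (E i) ε) ∧
    ENNReal.ofReal (1 - ε) ≤ lam (⋃ i, E i)}

/-- The relative Hamming `ε`-covering number `cov(μ, P, F, ε | π)`, defined through the
disintegration `μy` of `μ` over `π` and the image measure `ν`: the smallest `M` such that
there exists `S ⊆ Y` with `ν S ≥ 1 - ε` and `cov(μ_y, P, F, ε) ≤ M` for every `y ∈ S`. -/
noncomputable def hamCovRel {X Y : Type*} [MeasurableSpace X] [MeasurableSpace Y]
    (T : G → X → X) (μy : Y → Measure X) (ν : Measure Y) {r : ℕ} (P : X → Fin r)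
    (F : Finset G) (ε : ℝ) : ℕ :=
  sInf {M : ℕ | ∃ S : Set Y, MeasurableSet S ∧ ENNReal.ofReal (1 - ε) ≤ ν S ∧
    ∀ y ∈ S, hamCov T (μy y) P F ε ≤ M}

/-- A rate function: an increasing positive function on `ℕ` tending to infinity. -/
def IsRateFunction (U : ℕ → ℝ) : Prop :=
  (∀ n, 0 < U n) ∧ Monotone U ∧ Tendsto U atTop atTop

/-- Relative slow entropy of a partition:
`sup_{ε>0} limsup_n cov(μ, P, F_n, ε | π) / U(|F_n|)`, valued in `[0,∞]`. -/
noncomputable def slowEntropyPartRel {X Y : Type*} [MeasurableSpace X] [MeasurableSpace Y]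
    (T : G → X → X) (μy : Y → Measure X) (ν : Measure Y) {r : ℕ} (P : X → Fin r)
    (U : ℕ → ℝ) (F : ℕ → Finset G) : ℝ≥0∞ :=
  ⨆ ε ∈ Ioi (0 : ℝ),
    Filter.limsup
      (fun n => ENNReal.ofReal ((hamCovRel T μy ν P (F n) ε : ℝ) / U (F n).card)) atTop

/-- Relative slow entropy: the supremum over all finite measurable partitions. -/
noncomputable def slowEntropyRel {X Y : Type*} [MeasurableSpace X] [MeasurableSpace Y]
    (T : G → X → X) (μy : Y → Measure X) (ν : Measure Y)
    (U : ℕ → ℝ) (F : ℕ → Finset G) : ℝ≥0∞ :=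
  ⨆ (r : ℕ) (P : X → Fin r) (_ : Measurable P), slowEntropyPartRel T μy ν P U F

/-- The partition distance `dist_λ(P, Q) = λ{x : P(x) ≠ Q(x)}` between two labeled
partitions indexed by the same set. -/
noncomputable def partDist {Z : Type*} [MeasurableSpace Z] (lam : Measure Z)
    {ι : Type*} (P Q : Z → ι) : ℝ≥0∞ :=
  lam {z | P z ≠ Q z}

/-- Ergodicity of a measure-preserving `G`-action. -/
def IsErgodicAction {X : Type*} [MeasurableSpace X] (T : G → X → X) (μ : Measure X) : Prop :=
  ∀ s : Set X, MeasurableSet s → (∀ g, T g ⁻¹' s = s) → μ s = 0 ∨ μ s = 1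

end SlowEntropyDefs


section Aux

/-- The "separating" σ-algebra of a pair of points: sets which contain both or neither. -/
private def sepAlg {X : Type*} (x x' : X) : MeasurableSpace X where
  MeasurableSet' A := x ∈ A ↔ x' ∈ A
  measurableSet_empty := Iff.rfl
  measurableSet_compl _ hA := not_congr hA
  measurableSet_iUnion f hf := by
    simp only [Set.mem_iUnion]
    exact exists_congr hf

private lemma sep_lemma {G X Y : Type*} [Group G] [MeasurableSpace X] [MeasurableSpace Y]
    (T : G → X → X) (π : X → Y) (K : Finset G) {r s : ℕ} (P : X → Fin r) (Q' : X → Fin s)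
    (hQ' : @Measurable X (Fin s)
      (MeasurableSpace.generateFrom
        ({A : Set X | ∃ f ∈ K, ∃ i : Fin r, A = T f ⁻¹' (P ⁻¹' {i})} ∪
         {A : Set X | ∃ B : Set Y, MeasurableSet B ∧ A = π ⁻¹' B})) _ Q')
    {x x' : X} (hπeq : π x = π x') (hPeq : ∀ f ∈ K, P (T f x) = P (T f x')) :
    Q' x = Q' x' := by
  have hle : MeasurableSpace.generateFrom
      ({A : Set X | ∃ f ∈ K, ∃ i : Fin r, A = T f ⁻¹' (P ⁻¹' {i})} ∪
       {A : Set X | ∃ B : Set Y, MeasurableSet B ∧ A = π ⁻¹' B}) ≤ sepAlg x x' := by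
    apply MeasurableSpace.generateFrom_le
    rintro A (⟨f, hf, i, rfl⟩ | ⟨B, hB, rfl⟩)
    · show (x ∈ T f ⁻¹' (P ⁻¹' {i})) ↔ (x' ∈ T f ⁻¹' (P ⁻¹' {i}))
      simp only [Set.mem_preimage, Set.mem_singleton_iff, hPeq f hf]
    · show (x ∈ π ⁻¹' B) ↔ (x' ∈ π ⁻¹' B)
      simp only [Set.mem_preimage, hπeq]
  have hmem : @MeasurableSet X (sepAlg x x') (Q' ⁻¹' {Q' x}) :=
    hle _ (hQ' (measurableSet_singleton (Q' x)))
  have : (x ∈ Q' ⁻¹' {Q' x}) ↔ (x' ∈ Q' ⁻¹' {Q' x}) := hmem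
  exact (this.mp rfl).symm

/-- Name cells give a trivial bound for Hamming covering numbers. -/
private lemma namecell_mem {G X : Type*} [Group G] [MeasurableSpace X]
    (T : G → X → X) (lam : Measure X) (hlam : lam Set.univ = 1)
    {r : ℕ} (P : X → Fin r) (F : Finset G) {ε : ℝ} (hε : 0 ≤ ε) :
    Fintype.card (↥F → Fin r) ∈ {M : ℕ | ∃ E : Fin M → Set X,
      (∀ i, diamLE T P F (E i) ε) ∧ ENNReal.ofReal (1 - ε) ≤ lam (⋃ i, E i)} := by
  classical
  set e := Fintype.equivFin (↥F → Fin r) with he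
  refine ⟨fun j => {z | ∀ f : ↥F, P (T f.1 z) = e.symm j f}, ?_, ?_⟩
  · intro j z hz z' hz'
    have hfe : (F.filter fun f => P (T f z) ≠ P (T f z')) = ∅ := by
      apply Finset.filter_eq_empty_iff.mpr
      intro f hf
      simp only [ne_eq, not_not]
      rw [hz ⟨f, hf⟩, hz' ⟨f, hf⟩]
    unfold hamDist
    rw [hfe]
    simpa using hε
  · have hun : (⋃ j, {z | ∀ f : ↥F, P (T f.1 z) = e.symm j f}) = Set.univ := by
      ext z
      simp only [Set.mem_iUnion, Set.mem_univ, iff_true, Set.mem_setOf_eq]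
      exact ⟨e fun f => P (T f.1 z), fun f => by simp⟩
    rw [hun, hlam]
    exact ENNReal.ofReal_le_one.mpr (by linarith)

/-- The key Hamming distance comparison for points on the same fiber. -/
private lemma hamDist_bound {G X Y : Type*} [Group G] [MeasurableSpace X] [MeasurableSpace Y]
    (T : G → X → X) (S : G → Y → Y) (π : X → Y)
    (hmul : ∀ g g' x, T (g * g') x = T g (T g' x))
    (hequiv : ∀ g x, π (T g x) = S g (π x))
    (K Fn : Finset G) {r s : ℕ} (P : X → Fin r) (Q' : X → Fin s)
    (hQ' : @Measurable X (Fin s)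
      (MeasurableSpace.generateFrom
        ({A : Set X | ∃ f ∈ K, ∃ i : Fin r, A = T f ⁻¹' (P ⁻¹' {i})} ∪
         {A : Set X | ∃ B : Set Y, MeasurableSet B ∧ A = π ⁻¹' B})) _ Q')
    {x x' : X} (hπeq : π x = π x') (hFn : Fn.Nonempty) {ε' : ℝ} (hε'0 : 0 ≤ ε')
    (hfol : ∀ f ∈ K,
      ((Fn.card : ℝ) - ((((Fn.image fun h => f * h)) ∩ Fn).card : ℝ)) ≤ ε' * Fn.card)
    (hPd : hamDist T P Fn x x' ≤ ε') :
    hamDist T Q' Fn x x' ≤ 2 * K.card * ε' := by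
  classical
  have hcard : (0:ℝ) < (Fn.card : ℝ) := by exact_mod_cast Finset.card_pos.mpr hFn
  have hsub : Fn.filter (fun g => Q' (T g x) ≠ Q' (T g x')) ⊆
      K.biUnion fun f => Fn.filter fun u => P (T (f * u) x) ≠ P (T (f * u) x') := by
    intro g hg
    rw [Finset.mem_filter] at hg
    obtain ⟨hgF, hgQ⟩ := hg
    have hstep : ∃ f ∈ K, P (T f (T g x)) ≠ P (T f (T g x')) := by
      by_contra hcon
      push_neg at hcon
      exact hgQ (sep_lemma T π K P Q' hQ' (by rw [hequiv, hequiv, hπeq]) hcon)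
    obtain ⟨f, hf, hne⟩ := hstep
    rw [Finset.mem_biUnion]
    refine ⟨f, hf, Finset.mem_filter.mpr ⟨hgF, ?_⟩⟩
    rw [hmul f g x, hmul f g x']
    exact hne
  have hPd' : ((Fn.filter fun u => P (T u x) ≠ P (T u x')).card : ℝ) ≤ ε' * Fn.card := by
    unfold hamDist at hPd
    rw [div_le_iff₀ hcard] at hPd
    exact hPd
  have hperf : ∀ f ∈ K, ((Fn.filter fun u => P (T (f * u) x) ≠ P (T (f * u) x')).card : ℝ)
      ≤ 2 * ε' * Fn.card := by
    intro f hf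
    have himg : (Fn.filter fun u => P (T (f * u) x) ≠ P (T (f * u) x')).card =
        ((Fn.image fun h => f * h).filter fun u => P (T u x) ≠ P (T u x')).card := by
      rw [Finset.filter_image]
      exact (Finset.card_image_of_injective _ (mul_right_injective f)).symm
    have hsub2 : ((Fn.image fun h => f * h).filter fun u => P (T u x) ≠ P (T u x')) ⊆
        (Fn.filter fun u => P (T u x) ≠ P (T u x')) ∪ ((Fn.image fun h => f * h) \ Fn) := by
      intro h hh
      rw [Finset.mem_filter] at hh
      by_cases hhF : h ∈ Fn
      · exact Finset.mem_union_left _ (Finset.mem_filter.mpr ⟨hhF, hh.2⟩)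
      · exact Finset.mem_union_right _ (Finset.mem_sdiff.mpr ⟨hh.1, hhF⟩)
    have hA : ((Fn.image fun h => f * h)).card = Fn.card :=
      Finset.card_image_of_injective _ (mul_right_injective f)
    have hsd := Finset.card_sdiff_add_card_inter (Fn.image fun h => f * h) Fn
    have h2 : ((((Fn.image fun h => f * h) \ Fn)).card : ℝ) ≤ ε' * Fn.card := by
      have hcast : ((((Fn.image fun h => f * h) \ Fn)).card : ℝ) +
          ((((Fn.image fun h => f * h) ∩ Fn)).card : ℝ) =
          (((Fn.image fun h => f * h)).card : ℝ) := by exact_mod_cast hsd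
      have hAc : (((Fn.image fun h => f * h)).card : ℝ) = (Fn.card : ℝ) := by
        exact_mod_cast hA
      have := hfol f hf
      linarith
    have hle2 : (((Fn.image fun h => f * h).filter fun u =>
        P (T u x) ≠ P (T u x')).card : ℝ) ≤
        ((Fn.filter fun u => P (T u x) ≠ P (T u x')).card : ℝ) +
        ((((Fn.image fun h => f * h) \ Fn)).card : ℝ) := by
      have h3 := Finset.card_le_card hsub2
      have h4 := Finset.card_union_le (Fn.filter fun u => P (T u x) ≠ P (T u x'))
        ((Fn.image fun h => f * h) \ Fn)
      exact_mod_cast le_trans h3 h4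
    rw [himg]
    linarith
  have htot : ((Fn.filter fun g => Q' (T g x) ≠ Q' (T g x')).card : ℝ)
      ≤ K.card * (2 * ε' * Fn.card) := by
    have h1 : ((Fn.filter fun g => Q' (T g x) ≠ Q' (T g x')).card : ℝ) ≤
        ((K.biUnion fun f => Fn.filter fun u =>
          P (T (f * u) x) ≠ P (T (f * u) x')).card : ℝ) := by
      exact_mod_cast Finset.card_le_card hsub
    have h2 : ((K.biUnion fun f => Fn.filter fun u =>
        P (T (f * u) x) ≠ P (T (f * u) x')).card : ℝ) ≤
        ∑ f ∈ K, ((Fn.filter fun u => P (T (f * u) x) ≠ P (T (f * u) x')).card : ℝ) := by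
      have := Finset.card_biUnion_le (s := K)
        (t := fun f => Fn.filter fun u => P (T (f * u) x) ≠ P (T (f * u) x'))
      exact_mod_cast this
    have h3 : ∑ f ∈ K, ((Fn.filter fun u =>
        P (T (f * u) x) ≠ P (T (f * u) x')).card : ℝ) ≤ ∑ _f ∈ K, 2 * ε' * Fn.card :=
      Finset.sum_le_sum hperf
    have h4 : ∑ _f ∈ K, 2 * ε' * Fn.card = (K.card : ℝ) * (2 * ε' * Fn.card) := by
      rw [Finset.sum_const, nsmul_eq_mul]
    linarith
  unfold hamDist
  rw [div_le_iff₀ hcard]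
  calc ((Fn.filter fun g => Q' (T g x) ≠ Q' (T g x')).card : ℝ)
      ≤ K.card * (2 * ε' * Fn.card) := htot
    _ = 2 * K.card * ε' * Fn.card := by ring

end Aux

/-- Lemma `ApproximateByRefiningPartition`.
Let `P` be a finite measurable partition of `X`, and let `Q'` be a finite partition that is
measurable with respect to `P^{F_k} ∨ π⁻¹(B_Y)` for some `k`.  Then for any `ε > 0` there
is an `ε' > 0` such that `cov(μ, Q', F_n, ε | π) ≤ cov(μ, P, F_n, ε' | π)` for all
sufficiently large `n`. -/
theorem relative_cov_approximate_by_refining_partition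
    {G X Y : Type*} [Group G] [Countable G]
    [MeasurableSpace X] [MeasurableSpace Y] [StandardBorelSpace X] [StandardBorelSpace Y]
    (T : G → X → X) (μ : Measure X) (S : G → Y → Y) (ν : Measure Y)
    (hX : IsMPSystem T μ) (hY : IsMPSystem S ν)
    (π : X → Y) (hπ : IsFactorMap T μ S ν π)
    (μy : Y → Measure X) (hdis : IsDisintegration μ ν π μy)
    (F : ℕ → Finset G) (hF : IsFolner F)
    (r : ℕ) (P : X → Fin r) (hP : Measurable P)
    (k : ℕ) (s : ℕ) (Q' : X → Fin s)
    (hQ' : @Measurable X (Fin s)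
      (MeasurableSpace.generateFrom
        ({A : Set X | ∃ f ∈ F k, ∃ i : Fin r, A = T f ⁻¹' (P ⁻¹' {i})} ∪
         {A : Set X | ∃ B : Set Y, MeasurableSet B ∧ A = π ⁻¹' B})) _ Q')
    (ε : ℝ) (hε : 0 < ε) :
    ∃ ε' > 0,
      ∀ᶠ n in atTop, hamCovRel T μy ν Q' (F n) ε ≤ hamCovRel T μy ν P (F n) ε' := by
  classical
  haveI := hY.prob
  have hK : (F k).Nonempty := hF.1 k
  have hKcard : (1:ℝ) ≤ ((F k).card : ℝ) := by
    exact_mod_cast Nat.one_le_iff_ne_zero.mpr (Finset.card_ne_zero_of_mem hK.choose_spec)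
  set ε' : ℝ := ε / (2 * (F k).card) with hε'def
  have hε' : 0 < ε' := by positivity
  have hε'ε : ε' ≤ ε := by
    rw [hε'def, div_le_iff₀ (by linarith)]
    nlinarith
  have hεeq : 2 * ((F k).card : ℝ) * ε' = ε := by
    rw [hε'def]
    field_simp
  refine ⟨ε', hε', ?_⟩
  have hEv : ∀ᶠ n in atTop, ∀ f ∈ F k,
      ((F n).card : ℝ) - ((((F n).image fun h => f * h) ∩ F n).card : ℝ)
        ≤ ε' * (F n).card := by
    rw [eventually_all_finset]
    intro f _
    have h1 := (hF.2 f).eventually (eventually_ge_nhds (show 1 - ε' < 1 by linarith))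
    filter_upwards [h1] with n hn
    have hFn : (0:ℝ) < ((F n).card : ℝ) := by
      exact_mod_cast Finset.card_pos.mpr (hF.1 n)
    rw [le_div_iff₀ hFn] at hn
    nlinarith
  filter_upwards [hEv] with n hn
  -- the defining set for `hamCovRel T μy ν P (F n) ε'` is nonempty
  have hrelne : {M : ℕ | ∃ Sy : Set Y, MeasurableSet Sy ∧ ENNReal.ofReal (1 - ε') ≤ ν Sy ∧
      ∀ y ∈ Sy, hamCov T (μy y) P (F n) ε' ≤ M}.Nonempty := by
    refine ⟨Fintype.card (↥(F n) → Fin r), Set.univ, MeasurableSet.univ, ?_, fun y _ => ?_⟩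
    · rw [measure_univ]
      exact ENNReal.ofReal_le_one.mpr (by linarith)
    · exact Nat.sInf_le (namecell_mem T (μy y) ((hdis.prob y).measure_univ) P (F n) hε'.le)
  obtain ⟨Sy, hSmeas, hSν, hScov⟩ : hamCovRel T μy ν P (F n) ε' ∈
      {M : ℕ | ∃ Sy : Set Y, MeasurableSet Sy ∧ ENNReal.ofReal (1 - ε') ≤ ν Sy ∧
        ∀ y ∈ Sy, hamCov T (μy y) P (F n) ε' ≤ M} := Nat.sInf_mem hrelne
  set N := hamCovRel T μy ν P (F n) ε' with hN
  -- a measurable null set containing the bad fibers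
  have hnull : ν {y | ¬ μy y (π ⁻¹' {y}) = 1} = 0 := ae_iff.mp hdis.supp
  obtain ⟨t, htsub, htmeas, htnull⟩ := exists_measurable_superset_of_null hnull
  refine le_trans (Nat.sInf_le ?_) le_rfl
  refine ⟨Sy \ t, hSmeas.diff htmeas, ?_, ?_⟩
  · rw [measure_diff_null htnull]
    exact le_trans (ENNReal.ofReal_le_ofReal (by linarith)) hSν
  · intro y hy
    have hfib : μy y (π ⁻¹' {y}) = 1 := by
      by_contra hcon
      exact hy.2 (htsub hcon)
    have hfibmeas : MeasurableSet (π ⁻¹' {y}) := hπ.meas (measurableSet_singleton y)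
    haveI := hdis.prob y
    -- get an optimal cover for P at level ε'
    have hcovne : {M : ℕ | ∃ E : Fin M → Set X, (∀ i, diamLE T P (F n) (E i) ε') ∧
        ENNReal.ofReal (1 - ε') ≤ μy y (⋃ i, E i)}.Nonempty :=
      ⟨_, namecell_mem T (μy y) ((hdis.prob y).measure_univ) P (F n) hε'.le⟩
    obtain ⟨E, hEdiam, hEcov⟩ : hamCov T (μy y) P (F n) ε' ∈
        {M : ℕ | ∃ E : Fin M → Set X, (∀ i, diamLE T P (F n) (E i) ε') ∧
          ENNReal.ofReal (1 - ε') ≤ μy y (⋃ i, E i)} := Nat.sInf_mem hcovne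
    have hMN : hamCov T (μy y) P (F n) ε' ≤ N := hScov y hy.1
    refine le_trans (Nat.sInf_le ?_) hMN
    refine ⟨fun i => E i ∩ π ⁻¹' {y}, ?_, ?_⟩
    · intro i z hz z' hz'
      have hπz : π z = π z' := by
        have h1 : π z = y := hz.2
        have h2 : π z' = y := hz'.2
        rw [h1, h2]
      have hPd : hamDist T P (F n) z z' ≤ ε' := hEdiam i z hz.1 z' hz'.1
      have := hamDist_bound T S π hX.mul hπ.equiv (F k) (F n) P Q' hQ' hπz
        (hF.1 n) hε'.le hn hPd
      rwa [hεeq] at this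
    · have hiu : (⋃ i, E i ∩ π ⁻¹' {y}) = (⋃ i, E i) ∩ π ⁻¹' {y} :=
        (Set.iUnion_inter _ _).symm
      rw [hiu]
      have hcompl : μy y (π ⁻¹' {y})ᶜ = 0 := by
        rw [measure_compl hfibmeas (measure_ne_top _ _), hfib, measure_univ]
        simp
      have hle1 : μy y (⋃ i, E i) ≤ μy y ((⋃ i, E i) ∩ π ⁻¹' {y}) +
          μy y ((⋃ i, E i) \ π ⁻¹' {y}) := measure_le_inter_add_diff _ _ _
      have hle2 : μy y ((⋃ i, E i) \ π ⁻¹' {y}) = 0 :=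
        le_antisymm (le_trans (measure_mono (Set.diff_subset_compl _ _)) hcompl.le)
          (zero_le)
      calc ENNReal.ofReal (1 - ε) ≤ ENNReal.ofReal (1 - ε') :=
            ENNReal.ofReal_le_ofReal (by linarith)
        _ ≤ μy y (⋃ i, E i) := hEcov
        _ ≤ μy y ((⋃ i, E i) ∩ π ⁻¹' {y}) := by
            rw [hle2, add_zero] at hle1
            exact hle1
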